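/- Fix an alphabet size k ≥ 2. Let n and ℓ be positive integers and a, b integers with 0 ≤ a ≤ n and 0 ≤ b ≤ n. If there exists a marking of the k-ary n-cube in which every vertex has mark-count a or b, then there exists a marking of the k-ary (ℓ·n)-cube in which every vertex has mark-count ℓ·a or ℓ·b. -/

import Mathlib

/-- A marking of the `k`-ary `n`-cube: for each vertex `v : Fin n → Fin k` and
each direction `i`, the "edge through `v` in direction `i`" is the set of `k`
vertices agreeing with `v` in all coordinates except possibly `i`.  A marking
assigns to each such edge one of its `k` vertices: `mark v i` is the vertex
assigned to the edge through `v` in direction `i`; it must lie on that edge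
(`mem_edge`) and depend only on the edge itself (`compatible`). -/
structure Marking (k n : ℕ) where
  mark : (Fin n → Fin k) → Fin n → (Fin n → Fin k)
  mem_edge : ∀ v i j, j ≠ i → mark v i j = v j
  compatible : ∀ v w i, (∀ j, j ≠ i → v j = w j) → mark v i = mark w i

/-- The mark-count of a vertex `v`: the number of directions `i` such that
the edge through `v` in direction `i` has `v` as its assigned vertex. -/
def Marking.count {k n : ℕ} (m : Marking k n) (v : Fin n → Fin k) : ℕ :=
  (Finset.univ.filter fun i : Fin n => m.mark v i = v).card

namespace KaryScale

variable {k n ℓ : ℕ}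

/-- block index -/
def β (c : Fin (ℓ * n)) : Fin ℓ := ((finProdFinEquiv (m := ℓ) (n := n)).symm c).1

/-- within-block coordinate -/
def π (c : Fin (ℓ * n)) : Fin n := ((finProdFinEquiv (m := ℓ) (n := n)).symm c).2

lemma e_beta_pi (c : Fin (ℓ * n)) : finProdFinEquiv (β c, π c) = c := by
  show finProdFinEquiv (((finProdFinEquiv (m := ℓ) (n := n)).symm c).1,
      ((finProdFinEquiv (m := ℓ) (n := n)).symm c).2) = c
  rw [Prod.mk.eta, Equiv.apply_symm_apply]

lemma pi_e (j : Fin ℓ) (i : Fin n) : π (finProdFinEquiv (j, i)) = i := by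
  simp [π]

lemma e_ne (j : Fin ℓ) (i : Fin n) (c : Fin (ℓ * n)) (hi : i ≠ π c) :
    finProdFinEquiv (j, i) ≠ c := by
  intro hc
  apply hi
  rw [← hc, pi_e]

/-- the coordinatewise block-sum -/
def s (v : Fin (ℓ * n) → Fin (k + 1)) (i : Fin n) : Fin (k + 1) :=
  ∑ j : Fin ℓ, v (finProdFinEquiv (j, i))

lemma s_eq_of_agree (v w : Fin (ℓ * n) → Fin (k + 1)) (c : Fin (ℓ * n))
    (hvw : ∀ j, j ≠ c → v j = w j) (i : Fin n) (hi : i ≠ π c) : s v i = s w i := by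
  unfold s
  exact Finset.sum_congr rfl fun j _ => hvw _ (e_ne j i c hi)

lemma s_split (v : Fin (ℓ * n) → Fin (k + 1)) (c : Fin (ℓ * n)) :
    s v (π c) = v c + ∑ j ∈ Finset.univ.erase (β c), v (finProdFinEquiv (j, π c)) := by
  unfold s
  rw [← Finset.add_sum_erase _ _ (Finset.mem_univ (β c)), e_beta_pi]

lemma sub_s_eq (v w : Fin (ℓ * n) → Fin (k + 1)) (c : Fin (ℓ * n))
    (hvw : ∀ j, j ≠ c → v j = w j) :
    v c - s v (π c) = w c - s w (π c) := by
  rw [s_split, s_split]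
  have key : ∀ j ∈ Finset.univ.erase (β c),
      v (finProdFinEquiv (j, π c)) = w (finProdFinEquiv (j, π c)) := by
    intro j hj
    apply hvw
    intro hc
    apply (Finset.mem_erase.1 hj).1
    have : finProdFinEquiv (j, π c) = finProdFinEquiv (β c, π c) := by
      rw [hc, e_beta_pi]
    exact (Prod.mk.injEq .. ▸ finProdFinEquiv.injective this).1
  rw [Finset.sum_congr rfl key]
  abel

/-- the scaled marking -/
def scaleMark (m : Marking (k + 1) n) : Marking (k + 1) (ℓ * n) where
  mark v c := Function.update v c (v c + (m.mark (s v) (π c) (π c) - s v (π c)))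
  mem_edge v c j hj := Function.update_of_ne hj _ _
  compatible v w c hvw := by
    have hm : m.mark (s v) (π c) = m.mark (s w) (π c) :=
      m.compatible _ _ _ fun i hi => s_eq_of_agree v w c hvw i hi
    funext j
    try dsimp only
    by_cases hjc : j = c
    · subst hjc
      rw [Function.update_self, Function.update_self, hm]
      have hB := sub_s_eq v w j hvw
      calc v j + (m.mark (s w) (π j) (π j) - s v (π j))
          = (v j - s v (π j)) + m.mark (s w) (π j) (π j) := by abel
        _ = (w j - s w (π j)) + m.mark (s w) (π j) (π j) := by rw [hB]
        _ = w j + (m.mark (s w) (π j) (π j) - s w (π j)) := by abel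
    · rw [Function.update_of_ne hjc, Function.update_of_ne hjc, hvw j hjc]

lemma mark_eq_iff (m : Marking (k + 1) n) (u : Fin n → Fin (k + 1)) (i : Fin n) :
    m.mark u i = u ↔ m.mark u i i = u i := by
  constructor
  · intro h; rw [h]
  · intro h
    funext j
    by_cases hj : j = i
    · subst hj; exact h
    · exact m.mem_edge u i j hj

lemma card_filter_pi (P : Fin n → Prop) [DecidablePred P] :
    (Finset.univ.filter fun c : Fin (ℓ * n) => P (π c)).card
      = ℓ * (Finset.univ.filter P).card := by
  have h1 : (Finset.univ.filter fun c : Fin (ℓ * n) => P (π c)).card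
      = (Finset.univ.filter fun p : Fin ℓ × Fin n => P p.2).card := by
    apply Finset.card_equiv (finProdFinEquiv (m := ℓ) (n := n)).symm
    intro c
    simp [π]
  have h2 : (Finset.univ.filter fun p : Fin ℓ × Fin n => P p.2)
      = Finset.univ ×ˢ Finset.univ.filter P := by
    ext p
    simp
  rw [h1, h2, Finset.card_product, Finset.card_univ, Fintype.card_fin]

lemma scaleMark_count (m : Marking (k + 1) n) (v : Fin (ℓ * n) → Fin (k + 1)) :
    (scaleMark (ℓ := ℓ) m).count v = ℓ * m.count (s v) := by
  unfold Marking.count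
  have hcond : ∀ c : Fin (ℓ * n),
      ((scaleMark (ℓ := ℓ) m).mark v c = v) ↔ (m.mark (s v) (π c) = s v) := by
    intro c
    rw [mark_eq_iff (scaleMark m) v c]
    have hrfl : (scaleMark (ℓ := ℓ) m).mark v c c
        = Function.update v c (v c + (m.mark (s v) (π c) (π c) - s v (π c))) c := rfl
    rw [hrfl, Function.update_self, add_eq_left, sub_eq_zero]
    exact (mark_eq_iff m (s v) (π c)).symm
  rw [Finset.filter_congr fun c _ => by rw [hcond c]]
  exact card_filter_pi (fun i => m.mark (s v) i = s v)

end KaryScale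

theorem kary_marking_scale (k : ℕ) (hk : 2 ≤ k) (n ℓ : ℕ) (hn : 0 < n) (hℓ : 0 < ℓ)
    (a b : ℤ) (ha0 : 0 ≤ a) (han : a ≤ n) (hb0 : 0 ≤ b) (hbn : b ≤ n)
    (h : ∃ m : Marking k n, ∀ v, (m.count v : ℤ) = a ∨ (m.count v : ℤ) = b) :
    ∃ m : Marking k (ℓ * n), ∀ v,
      (m.count v : ℤ) = ℓ * a ∨ (m.count v : ℤ) = ℓ * b := by
  obtain ⟨k, rfl⟩ : ∃ k', k = k' + 1 := ⟨k - 1, by omega⟩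
  obtain ⟨m, hm⟩ := h
  refine ⟨KaryScale.scaleMark (ℓ := ℓ) m, fun v => ?_⟩
  rw [KaryScale.scaleMark_count m v]
  rcases hm (KaryScale.s v) with h' | h'
  · left; push_cast; rw [h']
  · right; push_cast; rw [h']
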